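/- A ranking score evaluated at a convex combination lies between the extremes: for every finite family p₁, …, pₙ ∈ dom(R_I) (n ≥ 1) and nonnegative reals λ₁, …, λₙ with λ₁ + ⋯ + λₙ = 1, one has min_{1≤i≤n} R_I(pᵢ) ≤ R_I(∑ᵢ λᵢ pᵢ) ≤ max_{1≤i≤n} R_I(pᵢ). -/

import Mathlib

/-- A performance on a finite sample space: nonnegative and summing to one. -/
def IsPerformance {Ω : Type*} [Fintype Ω] (p : Ω → ℝ) : Prop :=
  (∀ ω, 0 ≤ p ω) ∧ ∑ ω, p ω = 1

/-- An importance: nonnegative and nonzero. -/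
def IsImportance {Ω : Type*} [Fintype Ω] (I : Ω → ℝ) : Prop :=
  (∀ ω, 0 ≤ I ω) ∧ ∃ ω, 0 < I ω

/-- The ranking score with importance `I` and satisfaction `S`. -/
noncomputable def rankingScore {Ω : Type*} [Fintype Ω] (I S p : Ω → ℝ) : ℝ :=
  (∑ ω, I ω * S ω * p ω) / (∑ ω, I ω * p ω)

theorem stmt5 {Ω : Type*} [Fintype Ω] [Nonempty Ω] (S I : Ω → ℝ)
    (hI : IsImportance I) (n : ℕ) (hn : 1 ≤ n)
    (p : Fin n → Ω → ℝ)
    (hp : ∀ i, IsPerformance (p i) ∧ ∑ ω, I ω * p i ω ≠ 0)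
    (l : Fin n → ℝ) (hl : ∀ i, 0 ≤ l i) (hl1 : ∑ i, l i = 1) :
    (Finset.univ.inf' ⟨⟨0, hn⟩, Finset.mem_univ _⟩ (fun i => rankingScore I S (p i))
        ≤ rankingScore I S (∑ i, l i • p i)) ∧
    (rankingScore I S (∑ i, l i • p i)
        ≤ Finset.univ.sup' ⟨⟨0, hn⟩, Finset.mem_univ _⟩ (fun i => rankingScore I S (p i))) := by
  set a : Fin n → ℝ := fun i => ∑ ω, I ω * S ω * p i ω with ha
  set b : Fin n → ℝ := fun i => ∑ ω, I ω * p i ω with hb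
  have hbpos : ∀ i, 0 < b i := by
    intro i
    have h0 : 0 ≤ b i :=
      Finset.sum_nonneg fun ω _ => mul_nonneg (hI.1 ω) ((hp i).1.1 ω)
    exact lt_of_le_of_ne h0 (Ne.symm (hp i).2)
  have hR : ∀ i, rankingScore I S (p i) = a i / b i := fun i => rfl
  -- rewrite the score of the combination
  have hnum : ∑ ω, I ω * S ω * (∑ i, l i • p i) ω = ∑ i, l i * a i := by
    simp only [Finset.sum_apply, Pi.smul_apply, smul_eq_mul, Finset.mul_sum]
    rw [Finset.sum_comm]
    refine Finset.sum_congr rfl fun i _ => ?_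
    simp only [ha, Finset.mul_sum]
    refine Finset.sum_congr rfl fun ω _ => ?_
    ring
  have hden : ∑ ω, I ω * (∑ i, l i • p i) ω = ∑ i, l i * b i := by
    simp only [Finset.sum_apply, Pi.smul_apply, smul_eq_mul, Finset.mul_sum]
    rw [Finset.sum_comm]
    refine Finset.sum_congr rfl fun i _ => ?_
    simp only [hb, Finset.mul_sum]
    refine Finset.sum_congr rfl fun ω _ => ?_
    ring
  have hRc : rankingScore I S (∑ i, l i • p i) = (∑ i, l i * a i) / (∑ i, l i * b i) := by
    rw [rankingScore]
    simp only [Finset.sum_apply, Pi.smul_apply, smul_eq_mul] at *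
    rw [hnum, hden]
  have hDpos : 0 < ∑ i, l i * b i := by
    obtain ⟨j, hj⟩ : ∃ j, 0 < l j := by
      by_contra h
      push_neg at h
      have : ∀ i, l i = 0 := fun i => le_antisymm (h i) (hl i)
      simp [this] at hl1
    have : 0 < l j * b j := mul_pos hj (hbpos j)
    refine lt_of_lt_of_le this ?_
    refine Finset.single_le_sum (f := fun i => l i * b i) ?_ (Finset.mem_univ j)
    exact fun i _ => mul_nonneg (hl i) (hbpos i).le
  rw [hRc]
  constructor
  · rw [le_div_iff₀ hDpos, Finset.mul_sum]
    refine Finset.sum_le_sum fun i _ => ?_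
    have hmin : Finset.univ.inf' ⟨⟨0, hn⟩, Finset.mem_univ _⟩
        (fun i => rankingScore I S (p i)) ≤ a i / b i := by
      rw [← hR i]; exact Finset.inf'_le _ (Finset.mem_univ i)
    calc Finset.univ.inf' ⟨⟨0, hn⟩, Finset.mem_univ _⟩
          (fun i => rankingScore I S (p i)) * (l i * b i)
        ≤ (a i / b i) * (l i * b i) :=
          mul_le_mul_of_nonneg_right hmin (mul_nonneg (hl i) (hbpos i).le)
      _ = l i * a i := by
          have hne := (hbpos i).ne'
          field_simp
  · rw [div_le_iff₀ hDpos, Finset.mul_sum]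
    refine Finset.sum_le_sum fun i _ => ?_
    have hmax : a i / b i ≤ Finset.univ.sup' ⟨⟨0, hn⟩, Finset.mem_univ _⟩
        (fun i => rankingScore I S (p i)) := by
      rw [← hR i]; exact Finset.le_sup' (f := fun i => rankingScore I S (p i)) (Finset.mem_univ i)
    calc l i * a i = (a i / b i) * (l i * b i) := by
          have hne := (hbpos i).ne'
          field_simp
      _ ≤ Finset.univ.sup' ⟨⟨0, hn⟩, Finset.mem_univ _⟩
            (fun i => rankingScore I S (p i)) * (l i * b i) :=
          mul_le_mul_of_nonneg_right hmax (mul_nonneg (hl i) (hbpos i).le)
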